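/- If A is a nilpotent upper triangular n×n matrix over a field F, then there exist a subpermutation matrix Q (necessarily strictly upper triangular) and a unit upper triangular matrix U such that A is B_n-similar to QU. -/

import Mathlib

open Matrix

namespace SUTQU

variable {F : Type*} [Field F] {n : ℕ}

/-- strictly upper triangular -/
def SUT (M : Matrix (Fin n) (Fin n) F) : Prop := ∀ i j : Fin n, j ≤ i → M i j = 0

/-- row `k` has its leading entry equal to 1, in column `j` -/
def IsPivot (M : Matrix (Fin n) (Fin n) F) (k j : Fin n) : Prop :=
  M k j = 1 ∧ ∀ m, m < j → M k m = 0

/-- canonical form condition on rows with index `≥ i` -/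
def Good (i : ℕ) (M : Matrix (Fin n) (Fin n) F) : Prop :=
  SUT M ∧
  (∀ k : Fin n, i ≤ (k : ℕ) → (∀ m, M k m = 0) ∨ ∃ j, IsPivot M k j) ∧
  (∀ k k' j : Fin n, i ≤ (k : ℕ) → i ≤ (k' : ℕ) → k ≠ k' →
     IsPivot M k j → IsPivot M k' j → False)

lemma pivot_col_unique {M : Matrix (Fin n) (Fin n) F} {k j j' : Fin n}
    (h : IsPivot M k j) (h' : IsPivot M k j') : j = j' := by
  rcases lt_trichotomy j j' with hlt | he | hlt
  · exact absurd (h'.2 j hlt) (by rw [h.1]; exact one_ne_zero)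
  · exact he
  · exact absurd (h.2 j' hlt) (by rw [h'.1]; exact one_ne_zero)

lemma isUnit_of_inv (P Q : Matrix (Fin n) (Fin n) F) (h1 : P * Q = 1) (h2 : Q * P = 1) :
    IsUnit P := ⟨⟨P, Q, h1, h2⟩, rfl⟩

/-- conjugation by an elementary matrix `1 + c E_{ik}` -/
lemma elem_conj (i k : Fin n) (hik : i ≠ k) (c : F) (M : Matrix (Fin n) (Fin n) F) :
    ∃ M₂ : Matrix (Fin n) (Fin n) F,
      (1 + single i k c) * M = M₂ * (1 + single i k c) ∧
      ∀ p q, M₂ p q = M p q + (if p = i then c * M k q else 0)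
        - (if q = k then M p i * c else 0)
        - (if p = i then (if q = k then c * M k i * c else 0) else 0) := by
  set s := single i k c with hs
  have hss : s * s = 0 := single_mul_single_of_ne c i k i (Ne.symm hik) c
  have h1 : (1 - s) * (1 + s) = 1 := by
    have : (1 - s) * (1 + s) = 1 - s * s := by noncomm_ring
    rw [this, hss, sub_zero]
  refine ⟨(1 + s) * M * (1 - s), ?_, ?_⟩
  · rw [mul_assoc, h1, mul_one]
  · intro p q
    have expand : (1 + s) * M * (1 - s) = M + s * M - M * s - s * M * s := by noncomm_ring
    rw [expand]
    have e1 : (s * M) p q = if p = i then c * M k q else 0 := by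
      by_cases hp : p = i
      · rw [hs, hp, single_mul_apply_same]; simp
      · rw [hs, single_mul_apply_of_ne c i k p q hp M]; simp [hp]
    have e2 : (M * s) p q = if q = k then M p i * c else 0 := by
      by_cases hq : q = k
      · rw [hs, hq, mul_single_apply_same]; simp
      · rw [hs, mul_single_apply_of_ne c i k p q hq M]; simp [hq]
    have e3 : (s * M * s) p q = if p = i then (if q = k then c * M k i * c else 0) else 0 := by
      by_cases hq : q = k
      · rw [hs, hq, mul_single_apply_same]
        by_cases hp : p = i
        · rw [hp, single_mul_apply_same]; simp
        · rw [single_mul_apply_of_ne c i k p i hp M]; simp [hp]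
      · rw [hs, mul_single_apply_of_ne c i k p q hq
            (single i k c * M)]
        simp [hq]
    simp only [Matrix.sub_apply, Matrix.add_apply, e1, e2, e3]



lemma pivot_congr {M M₂ : Matrix (Fin n) (Fin n) F} {k j : Fin n}
    (h : ∀ q, M₂ k q = M k q) : IsPivot M₂ k j ↔ IsPivot M k j := by
  unfold IsPivot
  constructor
  · rintro ⟨h1, h2⟩; exact ⟨by rw [← h j]; exact h1, fun m hm => by rw [← h m]; exact h2 m hm⟩
  · rintro ⟨h1, h2⟩; exact ⟨by rw [h j]; exact h1, fun m hm => by rw [h m]; exact h2 m hm⟩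

lemma UT_one : ∀ p q : Fin n, q < p → (1 : Matrix (Fin n) (Fin n) F) p q = 0 := by
  intro p q h; exact Matrix.one_apply_ne (ne_of_gt h)

lemma UT_mul {P Q : Matrix (Fin n) (Fin n) F} (hP : ∀ p q : Fin n, q < p → P p q = 0)
    (hQ : ∀ p q : Fin n, q < p → Q p q = 0) :
    ∀ p q : Fin n, q < p → (P * Q) p q = 0 := by
  intro p q h
  rw [Matrix.mul_apply]
  apply Finset.sum_eq_zero
  intro l _
  rcases lt_or_ge l p with hl | hl
  · rw [hP p l hl, zero_mul]
  · rw [hQ l q (lt_of_lt_of_le h hl), mul_zero]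

lemma elem_UT {i k : Fin n} (hik : i < k) (c : F) :
    ∀ p q : Fin n, q < p → (1 + single i k c) p q = 0 := by
  intro p q hqp
  have h2 : single i k c p q = 0 := by
    apply single_apply_of_ne
    rintro ⟨rfl, rfl⟩
    exact lt_asymm hqp hik
  rw [Matrix.add_apply, h2, add_zero]
  exact UT_one p q hqp

lemma elem_isUnit (i k : Fin n) (hik : i ≠ k) (c : F) :
    IsUnit (1 + single i k c) := by
  set s := single i k c with hs
  have hss : s * s = 0 := by rw [hs]; exact single_mul_single_of_ne c i k i (Ne.symm hik) c
  apply isUnit_of_inv _ (1 - s)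
  · have h : (1 + s) * (1 - s) = 1 - s * s := by noncomm_ring
    rw [h, hss, sub_zero]
  · have h : (1 - s) * (1 + s) = 1 - s * s := by noncomm_ring
    rw [h, hss, sub_zero]

lemma scale_row (i : Fin n) (d0 : F) (hd0 : d0 ≠ 0) (M : Matrix (Fin n) (Fin n) F) :
    ∃ P M₂ : Matrix (Fin n) (Fin n) F,
      (∀ p q : Fin n, q < p → P p q = 0) ∧ IsUnit P ∧ P * M = M₂ * P ∧
      (∀ q, M₂ i q = if q = i then d0 * M i i * d0⁻¹ else d0 * M i q) ∧
      (∀ p q, p ≠ i → M₂ p q = if q = i then M p q * d0⁻¹ else M p q) := by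
  classical
  set d : Fin n → F := fun p => if p = i then d0 else 1 with hd
  have hdne : ∀ p, d p ≠ 0 := by
    intro p; rw [hd]; dsimp only; split
    · exact hd0
    · exact one_ne_zero
  set M₂ : Matrix (Fin n) (Fin n) F := Matrix.of (fun p q => d p * M p q * (d q)⁻¹) with hM₂
  refine ⟨Matrix.diagonal d, M₂, ?_, ?_, ?_, ?_, ?_⟩
  · intro p q h
    exact Matrix.diagonal_apply_ne d (ne_of_gt h)
  · rw [Matrix.isUnit_iff_isUnit_det, Matrix.det_diagonal]
    rw [isUnit_iff_ne_zero]
    exact Finset.prod_ne_zero_iff.mpr (fun p _ => hdne p)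
  · ext p q
    rw [Matrix.diagonal_mul, Matrix.mul_diagonal]
    show d p * M p q = (d p * M p q * (d q)⁻¹) * d q
    rw [mul_assoc (d p * M p q), inv_mul_cancel₀ (hdne q), mul_one]
  · intro q
    show d i * M i q * (d q)⁻¹ = _
    by_cases hq : q = i
    · subst hq; simp [hd]
    · simp [hd, hq]
  · intro p q hp
    show d p * M p q * (d q)⁻¹ = _
    by_cases hq : q = i
    · subst hq; simp [hd, hp]
    · simp [hd, hq, hp]

lemma reduce (i : Fin n) :
    ∀ fuel : ℕ, ∀ M : Matrix (Fin n) (Fin n) F, Good ((i : ℕ) + 1) M →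
    (∀ m : Fin n, M i m ≠ 0 → n - (m : ℕ) ≤ fuel) →
    ∃ P M₂ : Matrix (Fin n) (Fin n) F,
      (∀ p q : Fin n, q < p → P p q = 0) ∧ IsUnit P ∧ P * M = M₂ * P ∧
      Good ((i : ℕ) + 1) M₂ ∧
      ((∀ m, M₂ i m = 0) ∨ ∃ j, M₂ i j ≠ 0 ∧ (∀ m, m < j → M₂ i m = 0) ∧
        ∀ k : Fin n, (i : ℕ) < (k : ℕ) → ¬ IsPivot M₂ k j) := by
  intro fuel
  induction fuel with
  | zero =>
    intro M hG hf
    refine ⟨1, M, UT_one, isUnit_one, by rw [one_mul, mul_one], hG, Or.inl ?_⟩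
    intro m
    by_contra hm
    have h1 := hf m hm
    have h2 : (m : ℕ) < n := m.isLt
    omega
  | succ fuel ih =>
    intro M hG hf
    classical
    by_cases hz : ∀ m, M i m = 0
    · exact ⟨1, M, UT_one, isUnit_one, by rw [one_mul, mul_one], hG, Or.inl hz⟩
    push_neg at hz
    obtain ⟨m₀, hm₀⟩ := hz
    obtain ⟨j, hjmem, hjmin⟩ : ∃ j : Fin n, M i j ≠ 0 ∧ ∀ m, m < j → M i m = 0 := by
      set S : Finset (Fin n) := Finset.univ.filter (fun m => M i m ≠ 0) with hS
      have hSne : S.Nonempty := ⟨m₀, by simp [hS, hm₀]⟩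
      refine ⟨S.min' hSne, (Finset.mem_filter.mp (S.min'_mem hSne)).2, ?_⟩
      intro m hm
      by_contra hm0
      exact absurd hm
        (not_lt.2 (S.min'_le m (Finset.mem_filter.mpr ⟨Finset.mem_univ m, hm0⟩)))
    by_cases hp : ∃ k : Fin n, (i : ℕ) < (k : ℕ) ∧ IsPivot M k j
    · obtain ⟨k, hik, hpiv⟩ := hp
      have hikne : i ≠ k := by
        intro h
        rw [h] at hik
        omega
      have hikf : i < k := Fin.lt_def.mpr hik
      obtain ⟨hSUT, hOK, hDist⟩ := hG
      have hii : M i i = 0 := hSUT i i le_rfl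
      have hki : M k i = 0 := hSUT k i (le_of_lt hikf)
      obtain ⟨M₂, heq, hent⟩ := elem_conj i k hikne (-(M i j)) M
      -- rows other than i, at positions ≥ i, are unchanged
      have hrow : ∀ p : Fin n, p ≠ i → (i : ℕ) ≤ (p : ℕ) → ∀ q, M₂ p q = M p q := by
        intro p hpne hple q
        rw [hent]
        have h3 : M p i = 0 := hSUT p i (Fin.le_def.mpr hple)
        simp [hpne, h3]
      have hSUT₂ : SUT M₂ := by
        intro p q hqp
        rw [hent]
        have h0 : M p q = 0 := hSUT p q hqp
        rcases eq_or_ne p i with rfl | hpi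
        · have h2 : M k q = 0 := hSUT k q (le_of_lt (lt_of_le_of_lt hqp hikf))
          rcases eq_or_ne q k with rfl | hqk
          · exact absurd hikf (not_lt.2 hqp)
          · simp [hqk, h0, h2]
        · rcases eq_or_ne q k with rfl | hqk
          · have h3 : M p i = 0 := hSUT p i (le_trans (le_of_lt hikf) hqp)
            simp [hpi, h0, h3]
          · simp [hpi, hqk, h0]
      have hG₂ : Good ((i : ℕ) + 1) M₂ := by
        refine ⟨hSUT₂, ?_, ?_⟩
        · intro k' hk'
          have hk'ne : k' ≠ i := by
            intro h
            rw [h] at hk'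
            omega
          have hk'row : ∀ q, M₂ k' q = M k' q := hrow k' hk'ne (by omega)
          rcases hOK k' hk' with h | ⟨j', hj'⟩
          · left
            intro m
            rw [hk'row m]
            exact h m
          · right
            exact ⟨j', (pivot_congr hk'row).mpr hj'⟩
        · intro a b jj ha hb hab hpa hpb
          have hane : a ≠ i := by intro h; rw [h] at ha; omega
          have hbne : b ≠ i := by intro h; rw [h] at hb; omega
          have ra : ∀ q, M₂ a q = M a q := hrow a hane (by omega)
          have rb : ∀ q, M₂ b q = M b q := hrow b hbne (by omega)
          exact hDist a b jj ha hb hab ((pivot_congr ra).mp hpa) ((pivot_congr rb).mp hpb)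
      have hrowi : ∀ m : Fin n, m ≤ j → M₂ i m = 0 := by
        intro m hm
        rw [hent]
        rcases lt_or_eq_of_le hm with hlt | heqm
        · have h1 : M i m = 0 := hjmin m hlt
          have h2 : M k m = 0 := hpiv.2 m hlt
          simp [h1, h2, hii, hki]
        · subst heqm
          simp [hii, hki, hpiv.1]
      have hf₂ : ∀ m : Fin n, M₂ i m ≠ 0 → n - (m : ℕ) ≤ fuel := by
        intro m hm
        have hjm : j < m := by
          by_contra h
          exact hm (hrowi m (not_lt.1 h))
        have hfj : n - (j : ℕ) ≤ fuel + 1 := hf j hjmem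
        have hlt := Fin.lt_def.mp hjm
        have h2 : (m : ℕ) < n := m.isLt
        omega
      obtain ⟨P', M₃, hP'ut, hP'u, heq', hG₃, hres⟩ := ih M₂ hG₂ hf₂
      refine ⟨P' * (1 + single i k (-(M i j))), M₃,
        UT_mul hP'ut (elem_UT hikf _), hP'u.mul (elem_isUnit i k hikne _), ?_, hG₃, hres⟩
      rw [mul_assoc, heq, ← mul_assoc, heq', mul_assoc]
    · refine ⟨1, M, UT_one, isUnit_one, by rw [one_mul, mul_one], hG, Or.inr ?_⟩
      exact ⟨j, hjmem, hjmin, fun k hk hpv => hp ⟨k, hk, hpv⟩⟩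

lemma fixRow (i : Fin n) (M : Matrix (Fin n) (Fin n) F) (hG : Good ((i : ℕ) + 1) M) :
    ∃ P M₂ : Matrix (Fin n) (Fin n) F,
      (∀ p q : Fin n, q < p → P p q = 0) ∧ IsUnit P ∧ P * M = M₂ * P ∧ Good (i : ℕ) M₂ := by
  obtain ⟨P₁, M₁, h1ut, h1u, h1eq, hG₁, hres⟩ :=
    reduce i n M hG (fun m _ => by omega)
  rcases hres with hzero | ⟨j, hj0, hjlead, hjnp⟩
  · refine ⟨P₁, M₁, h1ut, h1u, h1eq, ?_⟩
    obtain ⟨hS, hOK, hD⟩ := hG₁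
    refine ⟨hS, ?_, ?_⟩
    · intro k hk
      rcases eq_or_ne k i with rfl | hne
      · exact Or.inl hzero
      · have hv : (k : ℕ) ≠ (i : ℕ) := fun h => hne (Fin.ext h)
        exact hOK k (by omega)
    · intro a b jj ha hb hab hpa hpb
      rcases eq_or_ne a i with ha' | hna
      · have h1 := hpa.1
        rw [ha', hzero jj] at h1
        exact zero_ne_one h1
      rcases eq_or_ne b i with hb' | hnb
      · have h1 := hpb.1
        rw [hb', hzero jj] at h1
        exact zero_ne_one h1
      have hva : (a : ℕ) ≠ (i : ℕ) := fun h => hna (Fin.ext h)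
      have hvb : (b : ℕ) ≠ (i : ℕ) := fun h => hnb (Fin.ext h)
      exact hD a b jj (by omega) (by omega) hab hpa hpb
  · have hiltj : i < j := by
      by_contra h
      exact hj0 (hG₁.1 i j (not_lt.1 h))
    obtain ⟨P₂, M₂, h2ut, h2u, h2eq, h2rowi, h2other⟩ :=
      scale_row i ((M₁ i j)⁻¹) (inv_ne_zero hj0) M₁
    obtain ⟨hS, hOK, hD⟩ := hG₁
    have hii : M₁ i i = 0 := hS i i le_rfl
    have hrow : ∀ p : Fin n, p ≠ i → (i : ℕ) ≤ (p : ℕ) → ∀ q, M₂ p q = M₁ p q := by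
      intro p hpne hple q
      rw [h2other p q hpne]
      rcases eq_or_ne q i with rfl | hqi
      · rw [if_pos rfl, hS p q (Fin.le_def.mpr hple), zero_mul]
      · rw [if_neg hqi]
    have hrowiz : ∀ q, q ≠ i → M₂ i q = (M₁ i j)⁻¹ * M₁ i q := by
      intro q hq
      rw [h2rowi q, if_neg hq]
    have hMii : M₂ i i = 0 := by
      rw [h2rowi i, if_pos rfl, hii, mul_zero, zero_mul]
    have hpivi : IsPivot M₂ i j := by
      constructor
      · rw [hrowiz j (ne_of_gt hiltj), inv_mul_cancel₀ hj0]
      · intro m hm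
        rcases eq_or_ne m i with rfl | hmi
        · exact hMii
        · rw [hrowiz m hmi, hjlead m hm, mul_zero]
    have hSUT₂ : SUT M₂ := by
      intro p q hqp
      have h0 : M₁ p q = 0 := hS p q hqp
      rcases eq_or_ne p i with hpi | hpi
      · rw [hpi]
        have h0' : M₁ i q = 0 := hpi ▸ h0
        rcases eq_or_ne q i with hqi | hqi
        · rw [hqi]
          exact hMii
        · rw [hrowiz q hqi, h0', mul_zero]
      · rw [h2other p q hpi]
        rcases eq_or_ne q i with hqi | hqi
        · rw [if_pos hqi, h0, zero_mul]
        · rw [if_neg hqi]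
          exact h0
    refine ⟨P₂ * P₁, M₂, UT_mul h2ut h1ut, h2u.mul h1u, ?_, ?_⟩
    · rw [mul_assoc, h1eq, ← mul_assoc, h2eq, mul_assoc]
    refine ⟨hSUT₂, ?_, ?_⟩
    · intro k hk
      rcases eq_or_ne k i with rfl | hne
      · exact Or.inr ⟨j, hpivi⟩
      · have hv : (k : ℕ) ≠ (i : ℕ) := fun h => hne (Fin.ext h)
        have hrk : ∀ q, M₂ k q = M₁ k q := hrow k hne (by omega)
        rcases hOK k (by omega) with h | ⟨j', hj'⟩
        · exact Or.inl (fun m => by rw [hrk m]; exact h m)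
        · exact Or.inr ⟨j', (pivot_congr hrk).mpr hj'⟩
    · intro a b jj ha hb hab hpa hpb
      rcases eq_or_ne a i with ha' | hna
      · have hnb : b ≠ i := fun h => hab (ha' ▸ h ▸ rfl)
        have hvb : (b : ℕ) ≠ (i : ℕ) := fun h => hnb (Fin.ext h)
        have hjj : jj = j := pivot_col_unique (ha' ▸ hpa) hpivi
        have hrb : ∀ q, M₂ b q = M₁ b q := hrow b hnb (by omega)
        exact hjnp b (by omega) ((pivot_congr hrb).mp (hjj ▸ hpb))
      rcases eq_or_ne b i with hb' | hnb
      · have hva : (a : ℕ) ≠ (i : ℕ) := fun h => hna (Fin.ext h)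
        have hjj : jj = j := pivot_col_unique (hb' ▸ hpb) hpivi
        have hra : ∀ q, M₂ a q = M₁ a q := hrow a hna (by omega)
        exact hjnp a (by omega) ((pivot_congr hra).mp (hjj ▸ hpa))
      · have hva : (a : ℕ) ≠ (i : ℕ) := fun h => hna (Fin.ext h)
        have hvb : (b : ℕ) ≠ (i : ℕ) := fun h => hnb (Fin.ext h)
        have hra : ∀ q, M₂ a q = M₁ a q := hrow a hna (by omega)
        have hrb : ∀ q, M₂ b q = M₁ b q := hrow b hnb (by omega)
        exact hD a b jj (by omega) (by omega) hab
          ((pivot_congr hra).mp hpa) ((pivot_congr hrb).mp hpb)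

lemma main (A : Matrix (Fin n) (Fin n) F) (hA : SUT A) (d : ℕ) :
    ∃ P M : Matrix (Fin n) (Fin n) F,
      (∀ p q : Fin n, q < p → P p q = 0) ∧ IsUnit P ∧ P * A = M * P ∧ Good (n - d) M := by
  induction d with
  | zero =>
    refine ⟨1, A, UT_one, isUnit_one, by rw [one_mul, mul_one], hA, ?_, ?_⟩
    · intro k hk
      exact absurd k.isLt (by omega)
    · intro a b jj ha hb hab hpa hpb
      exact absurd a.isLt (by omega)
  | succ d ihd =>
    obtain ⟨P₁, M₁, h1ut, h1u, h1eq, hG₁⟩ := ihd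
    by_cases hd : n - d = 0
    · have he : n - (d + 1) = n - d := by omega
      rw [he]
      exact ⟨P₁, M₁, h1ut, h1u, h1eq, hG₁⟩
    · have hlt : n - (d + 1) < n := by omega
      have hiv : ((⟨n - (d + 1), hlt⟩ : Fin n) : ℕ) + 1 = n - d := by
        show n - (d + 1) + 1 = n - d
        omega
      rw [← hiv] at hG₁
      obtain ⟨P₂, M₂, h2ut, h2u, h2eq, hG₂⟩ := fixRow ⟨n - (d + 1), hlt⟩ M₁ hG₁
      refine ⟨P₂ * P₁, M₂, UT_mul h2ut h1ut, h2u.mul h1u, ?_, hG₂⟩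
      rw [mul_assoc, h1eq, ← mul_assoc, h2eq, mul_assoc]

end SUTQU

open SUTQU in
/-- every strictly upper triangular matrix is B_n-similar to Q·U with
Q a strictly upper triangular subpermutation and U unit upper triangular. -/
theorem strictly_upper_triangular_similar_QU {F : Type*} [Field F] {n : ℕ}
    (A : Matrix (Fin n) (Fin n) F)
    (hA : ∀ i j : Fin n, j ≤ i → A i j = 0) :
    ∃ P Q U : Matrix (Fin n) (Fin n) F,
      (∀ i j : Fin n, j < i → P i j = 0) ∧ IsUnit P ∧
      (∀ i j : Fin n, j ≤ i → Q i j = 0) ∧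
      (∀ i j : Fin n, Q i j = 0 ∨ Q i j = 1) ∧
      (∀ i j k : Fin n, Q i j ≠ 0 → Q i k ≠ 0 → j = k) ∧
      (∀ i j k : Fin n, Q i j ≠ 0 → Q k j ≠ 0 → i = k) ∧
      (∀ i j : Fin n, j < i → U i j = 0) ∧ (∀ i : Fin n, U i i = 1) ∧
      P * A * P⁻¹ = Q * U := by
  classical
  obtain ⟨P, M, hPut, hPu, hPeq, hG⟩ := SUTQU.main A hA n
  rw [Nat.sub_self] at hG
  obtain ⟨hS, hOK, hD⟩ := hG
  set Q : Matrix (Fin n) (Fin n) F :=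
    Matrix.of (fun p q => if IsPivot M p q then (1 : F) else 0) with hQ
  set U : Matrix (Fin n) (Fin n) F :=
    Matrix.of (fun j m => if h : ∃ p, IsPivot M p j then M h.choose m
      else if j = m then 1 else 0) with hU
  have hQdef : ∀ p q, Q p q = if IsPivot M p q then (1 : F) else 0 := fun p q => rfl
  have hUdef : ∀ j m, U j m = if h : ∃ p, IsPivot M p j then M h.choose m
      else if j = m then 1 else 0 := fun j m => rfl
  have hQ01 : ∀ p q, Q p q = 0 ∨ Q p q = 1 := by
    intro p q
    rw [hQdef]
    split
    · exact Or.inr rfl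
    · exact Or.inl rfl
  have hQpiv : ∀ p q, Q p q ≠ 0 → IsPivot M p q := by
    intro p q h
    rw [hQdef] at h
    by_contra hc
    rw [if_neg hc] at h
    exact h rfl
  have hQsut : ∀ p q : Fin n, q ≤ p → Q p q = 0 := by
    intro p q hqp
    rw [hQdef, if_neg]
    intro hpiv
    have := hpiv.1
    rw [hS p q hqp] at this
    exact zero_ne_one this
  have hMQU : M = Q * U := by
    ext p m
    rw [Matrix.mul_apply]
    by_cases hrowp : ∃ j, IsPivot M p j
    · obtain ⟨j, hj⟩ := hrowp
      rw [Finset.sum_eq_single j ?h1 ?h2]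
      · have hex : ∃ p', IsPivot M p' j := ⟨p, hj⟩
        have hch : IsPivot M hex.choose j := hex.choose_spec
        have hpp : hex.choose = p := by
          by_contra hc
          exact hD hex.choose p j (Nat.zero_le _) (Nat.zero_le _) hc hch hj
        rw [hQdef, if_pos hj, hUdef, dif_pos hex, hpp, one_mul]
      case h1 =>
        intro q _ hqj
        rw [hQdef, if_neg, zero_mul]
        intro hq
        exact hqj (pivot_col_unique hq hj)
      case h2 =>
        intro hj'
        exact absurd (Finset.mem_univ j) hj'
    · have hz : ∀ m', M p m' = 0 := by
        rcases hOK p (Nat.zero_le _) with h | h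
        · exact h
        · exact absurd h hrowp
      rw [hz m]
      symm
      apply Finset.sum_eq_zero
      intro q _
      rw [hQdef, if_neg, zero_mul]
      intro hq
      exact hrowp ⟨q, hq⟩
  refine ⟨P, Q, U, hPut, hPu, hQsut, hQ01, ?_, ?_, ?_, ?_, ?_⟩
  · intro p j k hj hk
    exact pivot_col_unique (hQpiv p j hj) (hQpiv p k hk)
  · intro p j k hp hk
    by_contra hc
    exact hD p k j (Nat.zero_le _) (Nat.zero_le _) hc (hQpiv p j hp) (hQpiv k j hk)
  · intro a b hba
    rw [hUdef]
    split
    · next h =>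
      exact h.choose_spec.2 b hba
    · rw [if_neg (ne_of_gt hba)]
  · intro a
    rw [hUdef]
    split
    · next h =>
      exact h.choose_spec.1
    · rw [if_pos rfl]
  · have hdet : IsUnit P.det := (Matrix.isUnit_iff_isUnit_det P).mp hPu
    rw [hPeq, mul_assoc, Matrix.mul_nonsing_inv P hdet, mul_one]
    exact hMQU
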